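/- Let c_0,…,c_r > 0, let λ_0,…,λ_r > 0 with Σ λ_j = 1, and let b > 0. Then b ≤ Π_{j=0}^r (c_j/λ_j)^{λ_j} if and only if there exist ν_0,…,ν_r ≥ 0 and δ_0,…,δ_r ∈ ℝ such that ν_j = b·λ_j for all j, ν_j · log(ν_j/c_j) ≤ δ_j for all j, and Σ_{j=0}^r δ_j ≤ 0. -/

import Mathlib

/-- Relative-entropy reformulation of the circuit-number condition. -/
theorem circuit_number_iff_relative_entropy_feasible
    (r : ℕ) (c lam : Fin (r + 1) → ℝ)
    (hc : ∀ j, 0 < c j) (hlam : ∀ j, 0 < lam j)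
    (hlamsum : ∑ j, lam j = 1)
    (b : ℝ) (hb : 0 < b) :
    b ≤ ∏ j, (c j / lam j) ^ (lam j)
      ↔
    ∃ (ν δ : Fin (r + 1) → ℝ),
      (∀ j, 0 ≤ ν j) ∧
      (∀ j, ν j = b * lam j) ∧
      (∀ j, ν j * Real.log (ν j / c j) ≤ δ j) ∧
      (∑ j, δ j ≤ 0) := by
  have hP : 0 < ∏ j, (c j / lam j) ^ (lam j) :=
    Finset.prod_pos fun j _ => Real.rpow_pos_of_pos (div_pos (hc j) (hlam j)) _
  have hlogP : Real.log (∏ j, (c j / lam j) ^ (lam j))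
      = ∑ j, lam j * Real.log (c j / lam j) := by
    rw [Real.log_prod
      (fun j _ => ne_of_gt (Real.rpow_pos_of_pos (div_pos (hc j) (hlam j)) _))]
    exact Finset.sum_congr rfl fun j _ => Real.log_rpow (div_pos (hc j) (hlam j)) _
  have key : (∑ j, (b * lam j) * Real.log ((b * lam j) / c j))
      = b * (Real.log b - ∑ j, lam j * Real.log (c j / lam j)) := by
    have : ∀ j : Fin (r + 1), (b * lam j) * Real.log ((b * lam j) / c j)
        = b * (lam j * Real.log b) - b * (lam j * Real.log (c j / lam j)) := by
      intro j
      rw [Real.log_div (ne_of_gt (mul_pos hb (hlam j))) (ne_of_gt (hc j)),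
        Real.log_mul (ne_of_gt hb) (ne_of_gt (hlam j)),
        Real.log_div (ne_of_gt (hc j)) (ne_of_gt (hlam j))]
      ring
    rw [Finset.sum_congr rfl fun j _ => this j, Finset.sum_sub_distrib,
      ← Finset.mul_sum, ← Finset.mul_sum, ← Finset.sum_mul, hlamsum]
    ring
  constructor
  · intro h
    refine ⟨fun j => b * lam j, fun j => (b * lam j) * Real.log ((b * lam j) / c j),
      fun j => le_of_lt (mul_pos hb (hlam j)), fun j => rfl, fun j => le_refl _, ?_⟩
    rw [key]
    have hlog : Real.log b ≤ Real.log (∏ j, (c j / lam j) ^ (lam j)) :=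
      Real.log_le_log hb h
    rw [hlogP] at hlog
    nlinarith
  · rintro ⟨ν, δ, hν0, hνb, hνδ, hδ⟩
    have hsum : (∑ j, (b * lam j) * Real.log ((b * lam j) / c j)) ≤ 0 := by
      calc (∑ j, (b * lam j) * Real.log ((b * lam j) / c j))
          = ∑ j, ν j * Real.log (ν j / c j) := by
            exact Finset.sum_congr rfl fun j _ => by rw [hνb j]
        _ ≤ ∑ j, δ j := Finset.sum_le_sum fun j _ => hνδ j
        _ ≤ 0 := hδ
    rw [key] at hsum
    have hlog : Real.log b ≤ ∑ j, lam j * Real.log (c j / lam j) := by nlinarith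
    rw [← hlogP] at hlog
    exact (Real.log_le_log_iff hb hP).mp hlog
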